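/- Let A₃, H₁, H₀, L₀ be N×N complex matrices, set L₁ = −i·H₁, and suppose that for every λ ∈ ℂ with |λ| = 1 the matrices A₁(λ) = λ⁻¹H₁ + H₀ + λ·H̄₁ and A₂(λ) = λ⁻¹L₁ + L₀ + λ·L̄₁ satisfy [A₃, A₂(λ)] = −A₁(λ), [A₃, A₁(λ)] = A₂(λ), and [A₁(λ), A₂(λ)] = A₃. Then [L̄₁, −L₀ + i·H₀] = 0. -/

import Mathlib

open Matrix

/-- Entrywise complex conjugate of a complex matrix. -/
noncomputable def matConj {N : ℕ} (M : Matrix (Fin N) (Fin N) ℂ) : Matrix (Fin N) (Fin N) ℂ :=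
  M.map (starRingEnd ℂ)

/-- `[L̄₁, -L₀ + i H₀] = 0`. -/
theorem bracket_L1bar_beta0
    (N : ℕ) (hN : 1 ≤ N) (A₃ H₁ H₀ L₀ L₁ : Matrix (Fin N) (Fin N) ℂ)
    (hL₁ : L₁ = (-Complex.I) • H₁)
    (hcomm : ∀ l : ℂ, ‖l‖ = 1 →
      (A₃ * (l⁻¹ • L₁ + L₀ + l • matConj L₁) - (l⁻¹ • L₁ + L₀ + l • matConj L₁) * A₃
          = -(l⁻¹ • H₁ + H₀ + l • matConj H₁)) ∧
      (A₃ * (l⁻¹ • H₁ + H₀ + l • matConj H₁) - (l⁻¹ • H₁ + H₀ + l • matConj H₁) * A₃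
          = l⁻¹ • L₁ + L₀ + l • matConj L₁) ∧
      ((l⁻¹ • H₁ + H₀ + l • matConj H₁) * (l⁻¹ • L₁ + L₀ + l • matConj L₁)
          - (l⁻¹ • L₁ + L₀ + l • matConj L₁) * (l⁻¹ • H₁ + H₀ + l • matConj H₁) = A₃)) :
    matConj L₁ * (-L₀ + Complex.I • H₀) - (-L₀ + Complex.I • H₀) * matConj L₁ = 0 := by
  subst hL₁
  have hK : matConj ((-Complex.I) • H₁) = Complex.I • matConj H₁ := by
    ext i j
    simp [matConj]
  have h1 := (hcomm 1 (by simp)).2.2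
  have hm1 := (hcomm (-1) (by simp)).2.2
  have hi := (hcomm Complex.I (by simp [Complex.norm_I])).2.2
  have hmi := (hcomm (-Complex.I) (by simp [Complex.norm_I])).2.2
  rw [hK] at h1 hm1 hi hmi ⊢
  simp only [inv_one, one_smul, inv_neg, Complex.inv_I, mul_add, add_mul, neg_mul, mul_neg,
    smul_mul_assoc, mul_smul_comm, smul_smul, smul_neg, neg_smul, neg_neg, Complex.I_mul_I,
    mul_one, mul_neg_one, one_mul, neg_one_smul, one_smul, smul_add,
    smul_sub] at h1 hm1 hi hmi ⊢
  linear_combination (norm := (match_scalars <;> simp [Complex.ext_iff] <;> norm_num)) (-Complex.I/4) • h1 + (Complex.I/4) • hm1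
    + (-(1:ℂ)/4) • hi + ((1:ℂ)/4) • hmi
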